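/- Let H be a real Hilbert space with inner product a, u ∈ H, W a closed subspace, u_W the a-orthogonal projection of u onto W, V_i a closed subspace of H, and φ the a-orthogonal projection of u − u_W onto V_i. If W' = W + span{φ} and u_{W'} is the a-orthogonal projection of u onto W', then ‖u − u_{W'}‖² ≤ ‖u − u_W‖² − ‖φ‖². -/

import Mathlib

open RealInnerProductSpace

theorem stmt_13 {H : Type*} [NormedAddCommGroup H] [InnerProductSpace ℝ H] [CompleteSpace H]
    (W : Submodule ℝ H) (hWclosed : IsClosed (W : Set H))
    (Vi : Submodule ℝ H) (hViclosed : IsClosed (Vi : Set H))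
    (u u_W φ : H)
    (hu_W : u_W ∈ W) (hproj : ∀ w ∈ W, ⟪u - u_W, w⟫ = 0)
    (hφ : φ ∈ Vi) (hφproj : ∀ v ∈ Vi, ⟪(u - u_W) - φ, v⟫ = 0)
    (W' : Submodule ℝ H) (hW' : W' = W ⊔ Submodule.span ℝ {φ})
    (u_W' : H) (hu_W' : u_W' ∈ W') (hproj' : ∀ w ∈ W', ⟪u - u_W', w⟫ = 0) :
    ‖u - u_W'‖ ^ 2 ≤ ‖u - u_W‖ ^ 2 - ‖φ‖ ^ 2 := by
  have hφW' : φ ∈ W' := by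
    rw [hW']
    exact Submodule.mem_sup_right (Submodule.subset_span rfl)
  have hWsub : W ≤ W' := by rw [hW']; exact le_sup_left
  have hw : u_W + φ ∈ W' := W'.add_mem (hWsub hu_W) hφW'
  -- ‖u - (u_W + φ)‖² = ‖u - u_W‖² - ‖φ‖²
  have hip : ⟪u - u_W, φ⟫ = ‖φ‖ ^ 2 := by
    have := hφproj φ hφ
    rw [inner_sub_left] at this
    have := sub_eq_zero.mp this
    rw [this, real_inner_self_eq_norm_sq]
  have key : ‖u - (u_W + φ)‖ ^ 2 = ‖u - u_W‖ ^ 2 - ‖φ‖ ^ 2 := by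
    have : u - (u_W + φ) = (u - u_W) - φ := by module
    rw [this, norm_sub_sq_real, hip]
    ring
  -- best approximation: ‖u - u_W'‖² ≤ ‖u - w‖² for w ∈ W'
  have hbest : ‖u - u_W'‖ ^ 2 ≤ ‖u - (u_W + φ)‖ ^ 2 := by
    have hperp : ⟪u - u_W', u_W' - (u_W + φ)⟫ = 0 :=
      hproj' _ (W'.sub_mem hu_W' hw)
    have hd : u - (u_W + φ) = (u - u_W') + (u_W' - (u_W + φ)) := by abel
    rw [hd, norm_add_sq_real, hperp]
    nlinarith [sq_nonneg ‖u_W' - (u_W + φ)‖]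
  linarith [key ▸ hbest]
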